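/- arXiv:1606.00942 — 3 statements merged into one kernel-verified Lean document; each statement's English description precedes it below -/
import Mathlib

section
/- For every symmetric matrix B ∈ ℝ^{d×d} and every m ≥ 1, the Hutchinson trace estimator tr_m(B) satisfies E[tr_m(B)] = tr(B) and Var[tr_m(B)] = (2/m)(‖B‖_F² − Σ_{i=1}^d B_{ii}²), where ‖B‖_F denotes the Frobenius norm of B. -/
open scoped BigOperators

/-- Chebyshev node `x_k = cos(π(k+1/2)/(n+1))`. -/
noncomputable def chebNode (n k : ℕ) : ℝ := Real.cos (Real.pi * (k + 1/2) / (n + 1))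

/-- `j`-th Chebyshev polynomial of the first kind, as a real function. -/
noncomputable def chebT (j : ℕ) (x : ℝ) : ℝ := (Polynomial.Chebyshev.T ℝ j).eval x

/-- Coefficients of the degree-`n` Chebyshev interpolant of `f` on `[-1,1]`. -/
noncomputable def chebCoeff (f : ℝ → ℝ) (n j : ℕ) : ℝ :=
  if j = 0 then (1/(n+1)) * ∑ k ∈ Finset.range (n+1), f (chebNode n k)
  else (2/(n+1)) * ∑ k ∈ Finset.range (n+1), f (chebNode n k) * chebT j (chebNode n k)

/-- Degree-`n` Chebyshev interpolant of `f` on `[-1,1]`. -/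
noncomputable def chebInterp (f : ℝ → ℝ) (n : ℕ) (x : ℝ) : ℝ :=
  ∑ j ∈ Finset.range (n+1), chebCoeff f n j * chebT j x

/-- Coefficients of the degree-`n` Chebyshev interpolant of `f` on `[a,b]`. -/
noncomputable def chebCoeffAB (f : ℝ → ℝ) (a b : ℝ) (n j : ℕ) : ℝ :=
  chebCoeff (fun x => f ((b-a)/2 * x + (b+a)/2)) n j

/-- Degree-`n` Chebyshev interpolant of `f` on `[a,b]`. -/
noncomputable def chebInterpAB (f : ℝ → ℝ) (a b : ℝ) (n : ℕ) (x : ℝ) : ℝ :=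
  ∑ j ∈ Finset.range (n+1), chebCoeffAB f a b n j * chebT j ((2*x - (b+a))/(b-a))

/-- Bernstein ellipse `E_ρ`. -/
def bernsteinEllipse (ρ : ℝ) : Set ℂ :=
  {z : ℂ | (2*z.re/(ρ + ρ⁻¹))^2 + (2*z.im/(ρ - ρ⁻¹))^2 ≤ 1}

/-- Evaluation of the degree-`n` Chebyshev interpolant of `f` on `[a,b]` at a matrix `A`. -/
noncomputable def chebInterpMatrixAB {d : ℕ} (f : ℝ → ℝ) (a b : ℝ) (n : ℕ)
    (A : Matrix (Fin d) (Fin d) ℝ) : Matrix (Fin d) (Fin d) ℝ :=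
  ∑ j ∈ Finset.range (n+1), chebCoeffAB f a b n j •
    (Polynomial.aeval ((2/(b-a)) • A - ((b+a)/(b-a)) • (1 : Matrix (Fin d) (Fin d) ℝ))
      (Polynomial.Chebyshev.T ℝ j))

/-- Evaluation of the degree-`n` Chebyshev interpolant of `f` on `[-1,1]` at a matrix `A`. -/
noncomputable def chebInterpMatrix {d : ℕ} (f : ℝ → ℝ) (n : ℕ)
    (A : Matrix (Fin d) (Fin d) ℝ) : Matrix (Fin d) (Fin d) ℝ :=
  ∑ j ∈ Finset.range (n+1), chebCoeff f n j • (Polynomial.aeval A (Polynomial.Chebyshev.T ℝ j))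

/-- A Boolean vector seen as a `±1` (Rademacher) vector. -/
def signVec {d : ℕ} (ω : Fin d → Bool) : Fin d → ℝ := fun j => if ω j then 1 else -1

/-- Hutchinson's trace estimator with `m` Rademacher sample vectors encoded by `ω`. -/
noncomputable def hutchinson {d : ℕ} (m : ℕ) (B : Matrix (Fin d) (Fin d) ℝ)
    (ω : Fin m → Fin d → Bool) : ℝ :=
  (1/(m:ℝ)) * ∑ i : Fin m, dotProduct (signVec (ω i)) (B.mulVec (signVec (ω i)))

open Classical in
/-- Probability of an event under the uniform distribution on a finite sample space. -/
noncomputable def unifProb {Ω : Type*} [Fintype Ω] (P : Ω → Prop) : ℝ :=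
  (Finset.univ.filter P).card / Fintype.card Ω

section HutchAux


-- independence / factorization lemma
lemma sum_fn_prod {ι X : Type*} [Fintype ι] [DecidableEq ι] [Fintype X] (F : ι → X → ℝ) :
    ∑ v : ι → X, ∏ l, F l (v l) = ∏ l, ∑ x, F l x := by
  rw [Finset.prod_univ_sum]
  simp [Fintype.piFinset_univ]

lemma sum_bool_pow (n : ℕ) :
    ∑ b : Bool, (if b then (1:ℝ) else -1) ^ n = if Even n then 2 else 0 := by
  rcases Nat.even_or_odd n with h | h
  · simp [Fintype.sum_bool, h, h.neg_one_pow]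
  · simp [Fintype.sum_bool, h.neg_one_pow, Nat.not_even_iff_odd.2 h]

lemma prod_ind {d : ℕ} (f : Fin d → ℝ) (a : Fin d) :
    ∏ l, f l ^ (if l = a then 1 else 0 : ℕ) = f a := by
  have h : ∀ l, f l ^ (if l = a then 1 else 0 : ℕ) = if l = a then f l else 1 := by
    intro l; split <;> simp
  simp only [h, Finset.prod_ite_eq', Finset.mem_univ, if_true]

lemma moment {d : ℕ} (w : Fin d → ℕ) :
    ∑ v : Fin d → Bool, ∏ l, (signVec v l) ^ (w l)
      = ∏ l : Fin d, (if Even (w l) then (2:ℝ) else 0) := by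
  have := sum_fn_prod (fun (l : Fin d) (x : Bool) => (if x then (1:ℝ) else -1) ^ (w l))
  simp only [signVec]
  rw [this]
  exact Finset.prod_congr rfl fun l _ => sum_bool_pow (w l)



lemma sum_sign_two {d : ℕ} (a b : Fin d) :
    ∑ v : Fin d → Bool, signVec v a * signVec v b = if a = b then (2:ℝ)^d else 0 := by
  have h : ∀ v : Fin d → Bool, signVec v a * signVec v b
      = ∏ l, signVec v l ^ ((if l = a then 1 else 0) + (if l = b then 1 else 0) : ℕ) := by
    intro v
    simp only [pow_add, Finset.prod_mul_distrib, prod_ind]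
  rw [Finset.sum_congr rfl fun v _ => h v, moment]
  by_cases hab : a = b
  · subst hab
    rw [if_pos rfl]
    have h2 : ∀ l : Fin d, (if Even ((if l = a then 1 else 0) + (if l = a then 1 else 0) : ℕ)
        then (2:ℝ) else 0) = 2 := by
      intro l; rw [if_pos]; by_cases hl : l = a <;> simp [hl]
    simp only [h2, Finset.prod_const, Finset.card_univ, Fintype.card_fin]
  · rw [if_neg hab]
    apply Finset.prod_eq_zero (Finset.mem_univ a)
    have hne : ¬ Even ((if a = a then 1 else 0) + (if a = b then 1 else 0) : ℕ) := by
      simp [hab]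
    rw [if_neg hne]

lemma sum_sign_four {d : ℕ} (a b c e : Fin d) (hab : a ≠ b) (hce : c ≠ e) :
    ∑ v : Fin d → Bool, signVec v a * signVec v b * (signVec v c * signVec v e)
      = if (c = a ∧ e = b) ∨ (c = b ∧ e = a) then (2:ℝ)^d else 0 := by
  have h : ∀ v : Fin d → Bool, signVec v a * signVec v b * (signVec v c * signVec v e)
      = ∏ l, signVec v l ^ (((if l = a then 1 else 0) + (if l = b then 1 else 0))
          + ((if l = c then 1 else 0) + (if l = e then 1 else 0)) : ℕ) := by
    intro v
    simp only [pow_add, Finset.prod_mul_distrib, prod_ind]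
  rw [Finset.sum_congr rfl fun v _ => h v, moment]
  by_cases hmatch : (c = a ∧ e = b) ∨ (c = b ∧ e = a)
  · rw [if_pos hmatch]
    have h2 : ∀ l : Fin d, (if Even (((if l = a then 1 else 0) + (if l = b then 1 else 0))
          + ((if l = c then 1 else 0) + (if l = e then 1 else 0)) : ℕ)
        then (2:ℝ) else 0) = 2 := by
      intro l; rw [if_pos]
      rcases hmatch with ⟨hc, he⟩ | ⟨hc, he⟩ <;> simp only [hc, he] <;>
        by_cases hl1 : l = a <;> by_cases hl2 : l = b <;> simp [hl1, hl2, hab, Ne.symm hab] <;> decide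
    simp only [h2, Finset.prod_const, Finset.card_univ, Fintype.card_fin]
  · rw [if_neg hmatch]
    push_neg at hmatch
    by_cases hca : c = a
    · have heb : e ≠ b := hmatch.1 hca
      have hea : e ≠ a := fun h => hce (hca ▸ h ▸ rfl)
      apply Finset.prod_eq_zero (Finset.mem_univ e)
      have hne : ¬ Even (((if e = a then 1 else 0) + (if e = b then 1 else 0))
          + ((if e = c then 1 else 0) + (if e = e then 1 else 0)) : ℕ) := by
        simp [hea, heb, Ne.symm hce]
      rw [if_neg hne]
    · by_cases hcb : c = b
      · have hea : e ≠ a := hmatch.2 hcb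
        have heb : e ≠ b := fun h => hce (hcb ▸ h ▸ rfl)
        apply Finset.prod_eq_zero (Finset.mem_univ e)
        have hne : ¬ Even (((if e = a then 1 else 0) + (if e = b then 1 else 0))
            + ((if e = c then 1 else 0) + (if e = e then 1 else 0)) : ℕ) := by
          simp [hea, heb, Ne.symm hce]
        rw [if_neg hne]
      · apply Finset.prod_eq_zero (Finset.mem_univ c)
        have hne : ¬ Even (((if c = a then 1 else 0) + (if c = b then 1 else 0))
            + ((if c = c then 1 else 0) + (if c = e then 1 else 0) : ℕ)) := by
          simp [hca, hcb, hce]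
        rw [if_neg hne]



noncomputable def quad {d : ℕ} (B : Matrix (Fin d) (Fin d) ℝ) (v : Fin d → Bool) : ℝ :=
  dotProduct (signVec v) (B.mulVec (signVec v))

lemma sign_sq {d : ℕ} (v : Fin d → Bool) (j : Fin d) : signVec v j * signVec v j = 1 := by
  simp [signVec]; by_cases h : v j <;> simp [h]

lemma quad_eq {d : ℕ} (B : Matrix (Fin d) (Fin d) ℝ) (v : Fin d → Bool) :
    quad B v = ∑ p ∈ Finset.univ ×ˢ Finset.univ, B p.1 p.2 * (signVec v p.1 * signVec v p.2) := by
  rw [Finset.sum_product]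
  simp only [quad, dotProduct, Matrix.mulVec, Finset.mul_sum]
  exact Finset.sum_congr rfl fun j _ => Finset.sum_congr rfl fun k _ => by ring

lemma quad_center {d : ℕ} (B : Matrix (Fin d) (Fin d) ℝ) (v : Fin d → Bool) :
    quad B v - B.trace
      = ∑ p ∈ Finset.univ.offDiag, B p.1 p.2 * (signVec v p.1 * signVec v p.2) := by
  rw [quad_eq, ← Finset.diag_union_offDiag (Finset.univ : Finset (Fin d)),
    Finset.sum_union (Finset.disjoint_diag_offDiag _), Finset.sum_diag]
  have : ∀ i : Fin d, B i i * (signVec v i * signVec v i) = B i i := by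
    intro i; rw [sign_sq, mul_one]
  simp only [this, Matrix.trace, Matrix.diag]
  ring

lemma sum_quad {d : ℕ} (B : Matrix (Fin d) (Fin d) ℝ) :
    ∑ v : Fin d → Bool, quad B v = (2:ℝ)^d * B.trace := by
  simp only [quad_eq]
  rw [Finset.sum_comm]
  have : ∀ p ∈ Finset.univ ×ˢ (Finset.univ : Finset (Fin d)),
      ∑ v : Fin d → Bool, B p.1 p.2 * (signVec v p.1 * signVec v p.2)
        = B p.1 p.2 * (if p.1 = p.2 then (2:ℝ)^d else 0) := by
    intro p _
    rw [← Finset.mul_sum]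
    congr 1
    have := sum_sign_two p.1 p.2
    simpa [eq_comm] using this
  rw [Finset.sum_congr rfl this, Finset.sum_product]
  simp only [mul_ite, mul_zero, Finset.sum_ite_eq, Finset.sum_ite_eq', Finset.mem_univ, if_true]
  rw [Matrix.trace, Finset.mul_sum]
  exact Finset.sum_congr rfl fun i _ => by rw [Matrix.diag]; ring

lemma sum_quad_center {d : ℕ} (B : Matrix (Fin d) (Fin d) ℝ) :
    ∑ v : Fin d → Bool, (quad B v - B.trace) = 0 := by
  rw [Finset.sum_sub_distrib, sum_quad, Finset.sum_const, Finset.card_univ]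
  simp [Fintype.card_fun]


lemma sum_quad_center_sq {d : ℕ} (B : Matrix (Fin d) (Fin d) ℝ) (hB : B.IsSymm) :
    ∑ v : Fin d → Bool, (quad B v - B.trace)^2
      = (2:ℝ)^d * (2 * ((∑ i : Fin d, ∑ j : Fin d, (B i j)^2) - ∑ i : Fin d, (B i i)^2)) := by
  classical
  set c : ℝ := (2:ℝ)^d with hc
  set D := (Finset.univ : Finset (Fin d)).offDiag with hD
  have h1 : ∀ v : Fin d → Bool, (quad B v - B.trace)^2
      = ∑ p ∈ D, ∑ q ∈ D, (B p.1 p.2 * B q.1 q.2)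
          * (signVec v p.1 * signVec v p.2 * (signVec v q.1 * signVec v q.2)) := by
    intro v
    rw [quad_center, pow_two, Finset.sum_mul_sum]
    exact Finset.sum_congr rfl fun p _ => Finset.sum_congr rfl fun q _ => by ring
  rw [Finset.sum_congr rfl fun v _ => h1 v, Finset.sum_comm]
  have h2 : ∀ p ∈ D, (∑ v : Fin d → Bool, ∑ q ∈ D, (B p.1 p.2 * B q.1 q.2)
      * (signVec v p.1 * signVec v p.2 * (signVec v q.1 * signVec v q.2)))
      = c * (2 * (B p.1 p.2)^2) := by
    intro p hp
    have hp' : p.1 ≠ p.2 := (Finset.mem_offDiag.1 hp).2.2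
    rw [Finset.sum_comm]
    have h3 : ∀ q ∈ D, (∑ v : Fin d → Bool, (B p.1 p.2 * B q.1 q.2)
        * (signVec v p.1 * signVec v p.2 * (signVec v q.1 * signVec v q.2)))
        = (if q = p then B p.1 p.2 * B q.1 q.2 * c else 0)
          + (if q = (p.2, p.1) then B p.1 p.2 * B q.1 q.2 * c else 0) := by
      intro q hq
      have hq' : q.1 ≠ q.2 := (Finset.mem_offDiag.1 hq).2.2
      rw [← Finset.mul_sum, sum_sign_four p.1 p.2 q.1 q.2 hp' hq']
      by_cases h : q = p
      · subst h
        rw [if_pos (Or.inl ⟨rfl, rfl⟩), if_pos rfl, if_neg, add_zero, hc]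
        intro hcontra
        exact hq' (Prod.ext_iff.1 hcontra).1
      · by_cases h' : q = (p.2, p.1)
        · subst h'
          rw [if_pos (Or.inr ⟨rfl, rfl⟩), if_neg h, if_pos rfl, zero_add, hc]
        · rw [if_neg, if_neg h, if_neg h', mul_zero, add_zero]
          rintro (⟨h1, h2⟩ | ⟨h1, h2⟩)
          · exact h (Prod.ext h1 h2)
          · exact h' (Prod.ext h1 h2)
    rw [Finset.sum_congr rfl h3, Finset.sum_add_distrib, Finset.sum_ite_eq' D p _,
      Finset.sum_ite_eq' D (p.2, p.1) _, if_pos hp, if_pos]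
    · have hsym : B p.2 p.1 = B p.1 p.2 := hB.apply p.1 p.2
      simp only [hsym]
      ring
    · exact Finset.mem_offDiag.2 ⟨Finset.mem_univ _, Finset.mem_univ _, fun h => hp' h.symm⟩
  rw [Finset.sum_congr rfl h2, ← Finset.mul_sum, ← Finset.mul_sum]
  congr 1
  congr 1
  have hsplit : (∑ i : Fin d, ∑ j : Fin d, (B i j)^2)
      = (∑ i : Fin d, (B i i)^2) + ∑ p ∈ D, (B p.1 p.2)^2 := by
    rw [← Finset.sum_product' Finset.univ Finset.univ (fun i j => (B i j)^2),
      ← Finset.diag_union_offDiag (Finset.univ : Finset (Fin d)),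
      Finset.sum_union (Finset.disjoint_diag_offDiag _), Finset.sum_diag]
  rw [hsplit]
  ring


lemma sum_eval {X : Type*} [Fintype X] {m : ℕ} (i : Fin m) (g : X → ℝ) :
    ∑ ω : Fin m → X, g (ω i) = (Fintype.card X : ℝ)^(m-1) * ∑ x, g x := by
  classical
  have key := sum_fn_prod (fun (j : Fin m) (x : X) => if j = i then g x else 1)
  have hL : ∀ ω : Fin m → X, (∏ j, if j = i then g (ω j) else 1) = g (ω i) := by
    intro ω
    rw [Finset.prod_ite_eq' Finset.univ i (fun j => g (ω j)), if_pos (Finset.mem_univ i)]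
  rw [Finset.sum_congr rfl fun ω _ => (hL ω)] at key
  rw [key, ← Finset.mul_prod_erase Finset.univ _ (Finset.mem_univ i)]
  simp only [eq_self_iff_true, if_true]
  have hrest : ∏ j ∈ Finset.univ.erase i, (∑ x : X, if j = i then g x else 1)
      = (Fintype.card X : ℝ)^(m-1) := by
    have hconst : ∀ j ∈ Finset.univ.erase i, (∑ x : X, if j = i then g x else (1:ℝ))
        = (Fintype.card X : ℝ) := by
      intro j hj
      simp [(Finset.mem_erase.1 hj).1]
    rw [Finset.prod_congr rfl hconst, Finset.prod_const, Finset.card_erase_of_mem (Finset.mem_univ i),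
      Finset.card_univ, Fintype.card_fin]
  rw [hrest]
  ring

lemma sum_eval_pair {X : Type*} [Fintype X] {m : ℕ} (i i' : Fin m) (hii : i ≠ i')
    (g : X → ℝ) (hg : ∑ x, g x = 0) :
    ∑ ω : Fin m → X, g (ω i) * g (ω i') = 0 := by
  classical
  have key := sum_fn_prod (fun (j : Fin m) (x : X) =>
    if j = i then g x else if j = i' then g x else 1)
  have hL : ∀ ω : Fin m → X,
      (∏ j, if j = i then g (ω j) else if j = i' then g (ω j) else 1)
        = g (ω i) * g (ω i') := by
    intro ω
    rw [← Finset.mul_prod_erase Finset.univ _ (Finset.mem_univ i), if_pos rfl]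
    congr 1
    rw [Finset.prod_congr rfl (fun j hj => by
      rw [if_neg (Finset.mem_erase.1 hj).1])]
    rw [Finset.prod_ite_eq' _ i' (fun j => g (ω j)),
      if_pos (Finset.mem_erase.2 ⟨fun h => hii h.symm, Finset.mem_univ i'⟩)]
  rw [Finset.sum_congr rfl fun ω _ => (hL ω)] at key
  rw [key]
  apply Finset.prod_eq_zero (Finset.mem_univ i)
  simp [hg]

end HutchAux

/-- Mean and variance of the Hutchinson trace estimator. -/
theorem hutchinson_mean_variance {d : ℕ} (B : Matrix (Fin d) (Fin d) ℝ) (hB : B.IsSymm)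
    (m : ℕ) (hm : 1 ≤ m) :
    (∑ ω : Fin m → Fin d → Bool, hutchinson m B ω) /
        (Fintype.card (Fin m → Fin d → Bool) : ℝ) = B.trace ∧
    (∑ ω : Fin m → Fin d → Bool, (hutchinson m B ω - B.trace) ^ 2) /
        (Fintype.card (Fin m → Fin d → Bool) : ℝ) =
      (2 / (m : ℝ)) * ((∑ i : Fin d, ∑ j : Fin d, (B i j) ^ 2) - ∑ i : Fin d, (B i i) ^ 2) := by
  classical
  have hm0 : (m:ℝ) ≠ 0 := by
    have : 0 < m := hm
    exact_mod_cast this.ne'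
  have hc0 : ((2:ℝ)^d) ≠ 0 := by positivity
  have hX : (Fintype.card (Fin d → Bool) : ℝ) = (2:ℝ)^d := by
    rw [Fintype.card_fun, Fintype.card_fin, Fintype.card_bool]
    push_cast
    ring
  have hOmega : (Fintype.card (Fin m → Fin d → Bool) : ℝ) = ((2:ℝ)^d)^m := by
    rw [Fintype.card_fun, Fintype.card_fin, Nat.cast_pow, hX]
  have hhut : ∀ ω : Fin m → Fin d → Bool,
      hutchinson m B ω = (1/(m:ℝ)) * ∑ i : Fin m, quad B (ω i) := fun ω => rfl
  have hpow : ((2:ℝ)^d)^(m-1) * (2:ℝ)^d = ((2:ℝ)^d)^m := by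
    rw [← pow_succ, Nat.sub_add_cancel hm]
  -- mean
  have mean_sum : ∑ ω : Fin m → Fin d → Bool, hutchinson m B ω = ((2:ℝ)^d)^m * B.trace := by
    simp only [hhut]
    rw [← Finset.mul_sum, Finset.sum_comm]
    have h1 : ∀ i : Fin m, (∑ ω : Fin m → Fin d → Bool, quad B (ω i))
        = ((2:ℝ)^d)^(m-1) * ((2:ℝ)^d * B.trace) := by
      intro i
      rw [sum_eval i (quad B), hX, sum_quad]
    rw [Finset.sum_congr rfl fun i _ => h1 i, Finset.sum_const, Finset.card_univ,
      Fintype.card_fin, nsmul_eq_mul]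
    rw [show (1/(m:ℝ)) * ((m:ℝ) * (((2:ℝ)^d)^(m-1) * ((2:ℝ)^d * B.trace)))
        = ((m:ℝ) * (1/(m:ℝ))) * ((((2:ℝ)^d)^(m-1) * (2:ℝ)^d) * B.trace) from by ring,
      hpow, mul_one_div_cancel hm0, one_mul]
  constructor
  · rw [mean_sum, hOmega, mul_comm, mul_div_assoc, div_self (pow_ne_zero m hc0), mul_one]
  -- variance
  · set W : ℝ := (∑ i : Fin d, ∑ j : Fin d, (B i j)^2) - ∑ i : Fin d, (B i i)^2 with hW
    set g : (Fin d → Bool) → ℝ := fun v => quad B v - B.trace with hg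
    have hg0 : ∑ v : Fin d → Bool, g v = 0 := sum_quad_center B
    have hg2 : ∑ v : Fin d → Bool, g v * g v = (2:ℝ)^d * (2 * W) := by
      have := sum_quad_center_sq B hB
      rw [hW]
      rw [← this]
      exact Finset.sum_congr rfl fun v _ => by rw [hg]; ring
    have hcenter : ∀ ω : Fin m → Fin d → Bool,
        hutchinson m B ω - B.trace = (1/(m:ℝ)) * ∑ i : Fin m, g (ω i) := by
      intro ω
      rw [hhut]
      simp only [hg]
      rw [Finset.sum_sub_distrib, Finset.sum_const, Finset.card_univ, Fintype.card_fin,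
        nsmul_eq_mul]
      field_simp
    have hpair : ∀ i i' : Fin m, (∑ ω : Fin m → Fin d → Bool, g (ω i) * g (ω i'))
        = if i = i' then ((2:ℝ)^d)^(m-1) * ((2:ℝ)^d * (2 * W)) else 0 := by
      intro i i'
      by_cases h : i = i'
      · subst h
        rw [if_pos rfl]
        have := sum_eval i (fun v => g v * g v)
        rw [hX, hg2] at this
        exact this
      · rw [if_neg h]
        exact sum_eval_pair i i' h g hg0
    have var_sum : ∑ ω : Fin m → Fin d → Bool, (hutchinson m B ω - B.trace)^2
        = (1/(m:ℝ)) * (((2:ℝ)^d)^m * (2 * W)) := by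
      simp only [hcenter, mul_pow]
      rw [← Finset.mul_sum]
      have hsq : ∀ ω : Fin m → Fin d → Bool, (∑ i : Fin m, g (ω i))^2
          = ∑ i : Fin m, ∑ i' : Fin m, g (ω i) * g (ω i') := by
        intro ω
        rw [pow_two, Finset.sum_mul_sum]
      rw [Finset.sum_congr rfl fun ω _ => hsq ω, Finset.sum_comm]
      have h2 : ∀ i : Fin m, (∑ ω : Fin m → Fin d → Bool, ∑ i' : Fin m, g (ω i) * g (ω i'))
          = ((2:ℝ)^d)^(m-1) * ((2:ℝ)^d * (2 * W)) := by
        intro i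
        rw [Finset.sum_comm]
        rw [Finset.sum_congr rfl fun i' _ => hpair i i']
        rw [Finset.sum_ite_eq Finset.univ i
          (fun _ => ((2:ℝ)^d)^(m-1) * ((2:ℝ)^d * (2 * W))), if_pos (Finset.mem_univ i)]
      rw [Finset.sum_congr rfl fun i _ => h2 i, Finset.sum_const, Finset.card_univ,
        Fintype.card_fin, nsmul_eq_mul]
      rw [show ((1/(m:ℝ))^2) * ((m:ℝ) * (((2:ℝ)^d)^(m-1) * ((2:ℝ)^d * (2 * W))))
          = ((m:ℝ) * (1/(m:ℝ))) * ((1/(m:ℝ)) * ((((2:ℝ)^d)^(m-1) * (2:ℝ)^d) * (2 * W)))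
          from by ring, hpow, mul_one_div_cancel hm0, one_mul]
    rw [var_sum, hOmega]
    rw [show (1/(m:ℝ)) * (((2:ℝ)^d)^m * (2 * W)) = (((2:ℝ)^d)^m) * ((2/(m:ℝ)) * W) from by ring,
      mul_comm (((2:ℝ)^d)^m) _, mul_div_assoc, div_self (pow_ne_zero m hc0), mul_one]
end

section
/- Let δ ∈ (0, 1/2) and set ρ = 1/(1−δ) + √( (1/(1−δ))² − 1 ). Then for every z in the Bernstein ellipse E_ρ, the point w = ((1−2δ)z + 1)/2 is nonzero and |Log w| ≤ 5 log(2/δ), where Log denotes the principal branch of the complex logarithm. -/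
open scoped BigOperators

set_option maxHeartbeats 1600000 in
/-- bound on the principal logarithm over the Bernstein ellipse. -/
theorem log_bound_on_bernsteinEllipse (δ : ℝ) (hδ : δ ∈ Set.Ioo (0 : ℝ) (1/2))
    (ρ : ℝ) (hρ : ρ = 1 / (1 - δ) + Real.sqrt ((1 / (1 - δ)) ^ 2 - 1)) :
    ∀ z ∈ bernsteinEllipse ρ,
      ((1 - 2 * δ) * z + 1) / 2 ≠ 0 ∧
      ‖Complex.log (((1 - 2 * δ) * z + 1) / 2)‖ ≤ 5 * Real.log (2 / δ) := by
  obtain ⟨hδ0, hδ2⟩ := hδ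
  have h1δ : (0:ℝ) < 1 - δ := by linarith
  set a : ℝ := 1/(1-δ) with ha
  have ha1 : 1 < a := by rw [ha, lt_div_iff₀ h1δ]; linarith
  have ha' : a * (1-δ) = 1 := by rw [ha]; field_simp
  have has : (0:ℝ) < a^2 - 1 := by nlinarith
  set s : ℝ := Real.sqrt (a^2-1) with hs
  have hs0 : 0 < s := Real.sqrt_pos.mpr has
  have hss : s^2 = a^2 - 1 := Real.sq_sqrt has.le
  have hsa : s < a := by nlinarith
  have hρ' : ρ = a + s := hρ
  have hρ0 : 0 < ρ := by rw [hρ']; linarith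
  have hρinv : ρ⁻¹ = a - s := by
    apply inv_eq_of_mul_eq_one_right
    rw [hρ']; nlinarith
  clear_value a s
  intro z hz
  set x := z.re with hx
  set y := z.im with hy
  clear_value x y
  have hmem : (2*x/(2*a))^2 + (2*y/(2*s))^2 ≤ 1 := by
    have h := hz
    rw [bernsteinEllipse, Set.mem_setOf_eq, hρinv, hρ'] at h
    have e1 : a + s + (a - s) = 2*a := by ring
    have e2 : a + s - (a - s) = 2*s := by ring
    rw [e1, e2] at h
    rw [hx, hy]
    exact h
  clear hz
  have e1 : (2*x/(2*a))^2 = x^2/a^2 := by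
    rw [mul_div_mul_left _ _ (two_ne_zero), div_pow]
  have e2 : (2*y/(2*s))^2 = y^2/s^2 := by
    rw [mul_div_mul_left _ _ (two_ne_zero), div_pow]
  rw [e1, e2] at hmem
  have hkey : x^2*s^2 + y^2*a^2 ≤ a^2*s^2 := by
    rw [div_add_div _ _ (by positivity) (by positivity),
      div_le_one (by positivity)] at hmem
    nlinarith [hmem]
  have hy2 : y^2 ≤ s^2 := by nlinarith [sq_nonneg x, sq_nonneg a, mul_pos hs0 hs0]
  have hx2 : x^2 ≤ a^2 := by nlinarith [sq_nonneg y, mul_pos hs0 hs0]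
  have hsum : x^2 + y^2 ≤ a^2 := by
    nlinarith [hy2, mul_pos hs0 hs0, sq_nonneg y]
  have hxlb : -a ≤ x := by nlinarith [sq_nonneg (x+a), hx2, ha1]
  have habs : ‖z‖ ≤ a := by
    rw [Complex.norm_def, Complex.normSq_apply, ← hx, ← hy]
    calc Real.sqrt (x * x + y * y) ≤ Real.sqrt (a^2) := by
          apply Real.sqrt_le_sqrt; nlinarith
      _ = a := Real.sqrt_sq (by linarith)
  set w : ℂ := ((1 - 2 * (δ:ℂ)) * z + 1) / 2 with hw
  have hwre : w.re = ((1-2*δ)*x + 1)/2 := by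
    have : w = Complex.ofReal ((1-2*δ)/2) * z + Complex.ofReal (1/2) := by
      rw [hw]; push_cast; ring
    rw [this]
    simp [Complex.add_re, Complex.re_ofReal_mul]
    rw [← hx]
    ring
  have hδ21 : (0:ℝ) < 1 - 2*δ := by linarith
  have hrew : δ/2 ≤ w.re := by
    rw [hwre]
    have h1 : -((1-2*δ)*a) ≤ (1-2*δ)*x := by nlinarith
    nlinarith [h1, ha', sq_nonneg δ]
  have hwne : w ≠ 0 := by
    intro h
    rw [h] at hrew
    simp at hrew
    linarith
  have hwlb : δ/2 ≤ ‖w‖ := by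
    calc δ/2 ≤ w.re := hrew
      _ ≤ |w.re| := le_abs_self _
      _ ≤ ‖w‖ := Complex.abs_re_le_norm w
  have hwub : ‖w‖ ≤ 1 := by
    have h1 : ‖w‖ = ‖(1 - 2 * (δ:ℂ)) * z + 1‖ / 2 := by
      rw [hw, norm_div]; norm_num
    have h2 : ‖(1 - 2 * (δ:ℂ)) * z + 1‖ ≤ (1-2*δ) * ‖z‖ + 1 := by
      calc ‖(1 - 2 * (δ:ℂ)) * z + 1‖
          ≤ ‖(1 - 2 * (δ:ℂ)) * z‖ + ‖(1:ℂ)‖ := norm_add_le _ _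
        _ = |1-2*δ| * ‖z‖ + 1 := by
            rw [norm_mul, norm_one]
            congr 2
            rw [show (1 - 2 * (δ:ℂ)) = ((1 - 2*δ : ℝ) : ℂ) by push_cast; ring,
              Complex.norm_real, Real.norm_eq_abs]
        _ = (1-2*δ) * ‖z‖ + 1 := by rw [abs_of_pos hδ21]
    have h3 : (1-2*δ) * ‖z‖ ≤ (1-2*δ) * a :=
      mul_le_mul_of_nonneg_left habs hδ21.le
    have h4 : (1-2*δ) * a ≤ 1 := by nlinarith [ha']
    rw [h1]
    linarith
  -- log bounds
  set L := Real.log (2/δ) with hL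
  have hL1 : 1 ≤ L := by
    rw [hL, Real.le_log_iff_exp_le (by positivity)]
    have h42 : (4:ℝ) ≤ 2/δ := by rw [le_div_iff₀ hδ0]; linarith
    calc Real.exp 1 ≤ 2.7182818286 := Real.exp_one_lt_d9.le
      _ ≤ 4 := by norm_num
      _ ≤ 2/δ := h42
  have hlogabs : |Real.log (‖w‖)| ≤ L := by
    have hpos : (0:ℝ) < ‖w‖ := lt_of_lt_of_le (by positivity) hwlb
    have hneg : Real.log (‖w‖) ≤ 0 := Real.log_nonpos hpos.le hwub
    have hlb : Real.log (δ/2) ≤ Real.log (‖w‖) :=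
      Real.log_le_log (by positivity) hwlb
    have heq : Real.log (δ/2) = -L := by
      rw [hL, Real.log_div (by linarith) (by linarith),
        Real.log_div (by linarith) (by linarith)]
      ring
    rw [abs_of_nonpos hneg]
    linarith
  refine ⟨hwne, ?_⟩
  calc ‖Complex.log w‖
      ≤ |(Complex.log w).re| + |(Complex.log w).im| :=
        Complex.norm_le_abs_re_add_abs_im _
    _ = |Real.log (‖w‖)| + |Complex.arg w| := by
        rw [Complex.log_re, Complex.log_im]
    _ ≤ L + Real.pi := add_le_add hlogabs (Complex.abs_arg_le_pi w)
    _ ≤ L + 4 := by linarith [Real.pi_le_four]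
    _ ≤ 5 * L := by linarith
end

section
/- Let d ≥ 1, ε > 0, α = log(16d)/ε, and f(x) = (1/2)(1 + tanh(−αx)). Let q : ℝ → ℝ be any polynomial satisfying |q(x) − f(x)| ≤ 1/(16d) for all x ∈ [−1,1], and let A ∈ ℝ^{d×d} be symmetric with all eigenvalues in [−1,1]. Then: (i) if the smallest eigenvalue of A satisfies λ_min(A) ≥ ε/2, then tr(q(A)) ≤ 1/8; and (ii) if λ_min(A) ≤ −ε/2, then tr(q(A)) ≥ 3/4. -/
open scoped BigOperators

/-- Conjugation by a unitary matrix as an algebra homomorphism. -/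
noncomputable def conjAlgHomAux {d : ℕ} (u : Matrix.unitaryGroup (Fin d) ℝ) :
    Matrix (Fin d) (Fin d) ℝ →ₐ[ℝ] Matrix (Fin d) (Fin d) ℝ where
  toFun x := star (u : Matrix (Fin d) (Fin d) ℝ) * x * u
  map_one' := by simpa using Matrix.UnitaryGroup.star_mul_self u
  map_mul' x y := by
    have h : (u : Matrix (Fin d) (Fin d) ℝ) * star (u : Matrix (Fin d) (Fin d) ℝ) = 1 :=
      (Matrix.mem_unitaryGroup_iff).mp u.2
    calc star (u : Matrix (Fin d) (Fin d) ℝ) * (x * y) * u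
        = star (u : Matrix (Fin d) (Fin d) ℝ) * x * ((u : Matrix (Fin d) (Fin d) ℝ) *
            star (u : Matrix (Fin d) (Fin d) ℝ)) * y * u := by rw [h]; noncomm_ring
      _ = star (u : Matrix (Fin d) (Fin d) ℝ) * x * u *
            (star (u : Matrix (Fin d) (Fin d) ℝ) * y * u) := by noncomm_ring
  map_zero' := by simp
  map_add' x y := by noncomm_ring
  commutes' r := by
    simp only [Algebra.algebraMap_eq_smul_one, mul_smul_comm, smul_mul_assoc, mul_one, one_mul,
      Matrix.UnitaryGroup.star_mul_self u]

lemma trace_aeval_eq_sum {d : ℕ} (A : Matrix (Fin d) (Fin d) ℝ) (hA : A.IsHermitian)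
    (q : Polynomial ℝ) :
    (Polynomial.aeval A q).trace = ∑ i, q.eval (hA.eigenvalues i) := by
  classical
  set u := hA.eigenvectorUnitary with hu
  have h1 : conjAlgHomAux u A = Matrix.diagonal hA.eigenvalues := by
    have := hA.conjStarAlgAut_star_eigenvectorUnitary
    simpa [conjAlgHomAux, Function.comp, Unitary.conjStarAlgAut_star_apply] using this
  have h3 : Polynomial.aeval (conjAlgHomAux u A) q = conjAlgHomAux u (Polynomial.aeval A q) :=
    (Polynomial.aeval_algHom_apply _ _ _)
  have h4 : Polynomial.aeval (Matrix.diagonal hA.eigenvalues) q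
      = Matrix.diagonal (fun i => q.eval (hA.eigenvalues i)) := by
    have h2 : Matrix.diagonal hA.eigenvalues
        = Matrix.diagonalAlgHom (R := ℝ) (n := Fin d) (α := ℝ) hA.eigenvalues := rfl
    have hpi : (Polynomial.aeval hA.eigenvalues q : Fin d → ℝ)
        = fun i => q.eval (hA.eigenvalues i) := by
      funext i
      have := Polynomial.aeval_algHom_apply (Pi.evalAlgHom ℝ (fun _ : Fin d => ℝ) i)
        hA.eigenvalues q
      rw [Polynomial.aeval_pi_apply₂, Polynomial.coe_aeval_eq_eval]
    rw [h2, Polynomial.aeval_algHom_apply, hpi]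
    rfl
  have h5 : (conjAlgHomAux u (Polynomial.aeval A q)).trace = (Polynomial.aeval A q).trace := by
    show (star (u : Matrix (Fin d) (Fin d) ℝ) * _ * _).trace = _
    rw [Matrix.trace_mul_cycle, (Matrix.mem_unitaryGroup_iff).mp u.2, one_mul]
  calc (Polynomial.aeval A q).trace = (conjAlgHomAux u (Polynomial.aeval A q)).trace := h5.symm
    _ = (Polynomial.aeval (conjAlgHomAux u A) q).trace := by rw [h3]
    _ = (Matrix.diagonal (fun i => q.eval (hA.eigenvalues i))).trace := by rw [h1, h4]
    _ = ∑ i, q.eval (hA.eigenvalues i) := Matrix.trace_diagonal _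

/-- trace of a polynomial approximating the smoothed step function
separates matrices by the sign of their smallest eigenvalue. -/
theorem trace_poly_separates {d : ℕ} (hd : 1 ≤ d) (ε : ℝ) (hε : 0 < ε)
    (α : ℝ) (hα : α = Real.log (16 * d) / ε)
    (f : ℝ → ℝ) (hf : f = fun x => (1/2) * (1 + Real.tanh (-α * x)))
    (q : Polynomial ℝ)
    (hq : ∀ x ∈ Set.Icc (-1 : ℝ) 1, |q.eval x - f x| ≤ 1 / (16 * d))
    (A : Matrix (Fin d) (Fin d) ℝ) (hA : A.IsHermitian)
    (heig : ∀ i, hA.eigenvalues i ∈ Set.Icc (-1 : ℝ) 1) :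
    ((∀ i, ε / 2 ≤ hA.eigenvalues i) → (Polynomial.aeval A q).trace ≤ 1/8) ∧
    ((∃ i, hA.eigenvalues i ≤ -(ε / 2)) → 3/4 ≤ (Polynomial.aeval A q).trace) := by
  have hd1 : (1:ℝ) ≤ (d:ℝ) := by exact_mod_cast hd
  have h16d : (0:ℝ) < 16 * d := by linarith
  have hα0 : 0 ≤ α := by
    rw [hα]
    exact div_nonneg (Real.log_nonneg (by linarith)) hε.le
  have hαε : α * ε = Real.log (16 * d) := by
    rw [hα]; field_simp
  have hexp : Real.exp (α * ε) = 16 * d := by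
    rw [hαε, Real.exp_log h16d]
  -- closed form for f
  have hfx : ∀ x : ℝ, f x = 1 / (Real.exp (2 * α * x) + 1) := by
    intro x
    have hab : Real.exp (-(α * x)) * Real.exp (α * x) = 1 := by
      rw [← Real.exp_add]; ring_nf; exact Real.exp_zero
    have hb : Real.exp (2 * α * x) = Real.exp (α * x) * Real.exp (α * x) := by
      rw [← Real.exp_add]; ring_nf
    have hc2 : 0 < Real.exp (2 * α * x) + 1 := by positivity
    rw [hf]
    simp only
    rw [show -α * x = -(α * x) by ring]
    rw [Real.tanh_eq_sinh_div_cosh, Real.sinh_eq, Real.cosh_eq, neg_neg]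
    have hc' : 0 < Real.exp (-(α * x)) + Real.exp (α * x) := by positivity
    field_simp
    nlinarith [hab, hb, Real.exp_pos (α * x), Real.exp_pos (-(α * x))]
  have hfpos : ∀ x : ℝ, 0 < f x := by
    intro x; rw [hfx x]; positivity
  -- bound when x ≥ ε/2
  have hf_le : ∀ x : ℝ, ε / 2 ≤ x → f x ≤ 1 / (16 * d) := by
    intro x hx
    rw [hfx x]
    have h1 : α * ε ≤ 2 * α * x := by nlinarith
    have h2 : (16:ℝ) * d ≤ Real.exp (2 * α * x) := by
      rw [← hexp]; exact Real.exp_le_exp.mpr h1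
    have : (16:ℝ) * d ≤ Real.exp (2 * α * x) + 1 := by linarith
    exact one_div_le_one_div_of_le h16d this
  -- bound when x ≤ -ε/2
  have hf_ge : ∀ x : ℝ, x ≤ -(ε / 2) → 16 / 17 ≤ f x := by
    intro x hx
    rw [hfx x]
    have h1 : 2 * α * x ≤ -(α * ε) := by nlinarith
    have h2 : Real.exp (2 * α * x) ≤ 1 / (16 * d) := by
      calc Real.exp (2 * α * x) ≤ Real.exp (-(α * ε)) := Real.exp_le_exp.mpr h1
        _ = 1 / (16 * d) := by rw [Real.exp_neg, hexp, one_div]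
    have h3 : Real.exp (2 * α * x) ≤ 1 / 16 := by
      calc Real.exp (2 * α * x) ≤ 1 / (16 * d) := h2
        _ ≤ 1 / 16 := by
          apply one_div_le_one_div_of_le (by norm_num)
          linarith
    have h4 : (0:ℝ) < Real.exp (2 * α * x) + 1 := by positivity
    rw [div_le_div_iff₀ (by norm_num) h4]
    nlinarith
  rw [trace_aeval_eq_sum A hA q]
  have hqle : ∀ i : Fin d, q.eval (hA.eigenvalues i) ≤ f (hA.eigenvalues i) + 1 / (16 * d) := by
    intro i
    have := hq _ (heig i)
    have := abs_le.mp this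
    linarith [this.2]
  have hqge : ∀ i : Fin d, f (hA.eigenvalues i) - 1 / (16 * d) ≤ q.eval (hA.eigenvalues i) := by
    intro i
    have := abs_le.mp (hq _ (heig i))
    linarith [this.1]
  have hdne : (d:ℝ) ≠ 0 := by linarith
  constructor
  · intro h
    calc ∑ i, q.eval (hA.eigenvalues i)
        ≤ ∑ _i : Fin d, (1 / (16 * (d:ℝ)) + 1 / (16 * (d:ℝ))) := by
          apply Finset.sum_le_sum
          intro i _
          have := hf_le _ (h i)
          linarith [hqle i]
      _ = (d:ℝ) * (1 / (16 * (d:ℝ)) + 1 / (16 * (d:ℝ))) := by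
          rw [Finset.sum_const, Finset.card_univ, Fintype.card_fin, nsmul_eq_mul]
      _ = 1/8 := by field_simp; ring
  · rintro ⟨i, hi⟩
    have hsumf : 16 / 17 ≤ ∑ j, f (hA.eigenvalues j) := by
      calc (16:ℝ)/17 ≤ f (hA.eigenvalues i) := hf_ge _ hi
        _ ≤ ∑ j, f (hA.eigenvalues j) := by
            apply Finset.single_le_sum (fun j _ => (hfpos _).le) (Finset.mem_univ i)
    calc (3:ℝ)/4 ≤ 16/17 - 1/16 := by norm_num
      _ ≤ ∑ j, f (hA.eigenvalues j) - (d:ℝ) * (1 / (16 * d)) := by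
          have : (d:ℝ) * (1 / (16 * d)) = 1/16 := by field_simp
          rw [this]; linarith
      _ = ∑ j, (f (hA.eigenvalues j) - 1 / (16 * d)) := by
          rw [Finset.sum_sub_distrib, Finset.sum_const, Finset.card_univ, Fintype.card_fin,
            nsmul_eq_mul]
      _ ≤ ∑ j, q.eval (hA.eigenvalues j) := Finset.sum_le_sum (fun j _ => hqge j)
end
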